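/- (Bounded generalized von Neumann inequality for product measures.) Let d ≥ 1 and let (X_1,μ_1),…,(X_d,μ_d) be finite probability spaces with product measure μ on X = X_1 × ⋯ × X_d. Let h : X → ℝ and, for each 1 ≤ j ≤ d, let u_j : ∏_{k ≠ j} X_k → [0,1]. Then |∫_X h(x) ∏_{j=1}^d u_j(x_{[d]∖{j}}) dμ(x)| ≤ ‖h‖_□. -/

import Mathlib

noncomputable section

variable {d : ℕ} {X : Fin d → Type} [∀ i, Fintype (X i)]

private def mrg (x y : (i : Fin d) → X i) (ω : Fin d → Bool) : (i : Fin d) → X i :=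
  fun i => if ω i then y i else x i

private def Om (T : Finset (Fin d)) : Finset (Fin d → Bool) :=
  Finset.univ.filter (fun ω => ∀ i, ω i = true → i ∈ T)

private lemma mem_Om {T : Finset (Fin d)} {ω : Fin d → Bool} :
    ω ∈ Om T ↔ ∀ i, ω i = true → i ∈ T := by simp [Om]

private lemma Om_false {T : Finset (Fin d)} {j : Fin d} (hj : j ∉ T) {ω : Fin d → Bool}
    (hω : ω ∈ Om T) : ω j = false := by
  cases hb : ω j with
  | false => rfl
  | true => exact absurd (mem_Om.mp hω j hb) hj

private def PP (h : ((i : Fin d) → X i) → ℝ) (v : Fin d → ((i : Fin d) → X i) → ℝ)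
    (T : Finset (Fin d)) (x y : (i : Fin d) → X i) : ℝ :=
  (∏ ω ∈ Om T, h (mrg x y ω)) * ∏ j ∈ Tᶜ, ∏ ω ∈ Om T, v j (mrg x y ω)

private def AA (μ : (i : Fin d) → X i → ℝ) (h : ((i : Fin d) → X i) → ℝ)
    (v : Fin d → ((i : Fin d) → X i) → ℝ) (T : Finset (Fin d)) : ℝ :=
  ∑ x : (i : Fin d) → X i, ∑ y : (i : Fin d) → X i,
    (∏ i, μ i (x i)) * (∏ i, μ i (y i)) * PP h v T x y

private def ins (j : Fin d) (a : X j) (z : (k : {k : Fin d // k ≠ j}) → X k.1) :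
    (i : Fin d) → X i :=
  (Equiv.piSplitAt j X).symm (a, z)

private lemma ins_same (j : Fin d) (a : X j) (z : (k : {k : Fin d // k ≠ j}) → X k.1) :
    ins j a z j = a := by simp [ins, Equiv.piSplitAt]

private lemma ins_ne (j : Fin d) (a : X j) (z : (k : {k : Fin d // k ≠ j}) → X k.1)
    {i : Fin d} (hi : i ≠ j) : ins j a z i = z ⟨i, hi⟩ := by
  simp [ins, Equiv.piSplitAt, hi]

private lemma sum_ins (j : Fin d) (g : ((i : Fin d) → X i) → ℝ) :
    ∑ x : (i : Fin d) → X i, g x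
      = ∑ z : (k : {k : Fin d // k ≠ j}) → X k.1, ∑ a : X j, g (ins j a z) := by
  rw [← Equiv.sum_comp (Equiv.piSplitAt j X).symm g, Fintype.sum_prod_type]
  exact Finset.sum_comm

private lemma prod_ins (j : Fin d) (a : X j) (z : (k : {k : Fin d // k ≠ j}) → X k.1)
    (g : (i : Fin d) → X i → ℝ) :
    ∏ i, g i (ins j a z i) = g j a * ∏ k : {k : Fin d // k ≠ j}, g k.1 (z k) := by
  rw [Fintype.prod_eq_mul_prod_compl j, ins_same]
  congr 1
  rw [Finset.prod_subtype (p := fun i => i ≠ j) ({j}ᶜ : Finset (Fin d)) (by simp)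
    (fun i => g i (ins j a z i))]
  exact Finset.prod_congr rfl fun k _ => by rw [ins_ne j a z k.2]

private lemma sum_w (μ : (i : Fin d) → X i → ℝ) (hμ1 : ∀ i, ∑ x, μ i x = 1) :
    ∑ y : (i : Fin d) → X i, ∏ i, μ i (y i) = 1 := by
  rw [← Fintype.piFinset_univ, ← Finset.prod_univ_sum]
  simp [hμ1]

private lemma sum_w' {ι : Type} [Fintype ι] [DecidableEq ι] (Y : ι → Type) [∀ i, Fintype (Y i)]
    (ν : (i : ι) → Y i → ℝ) (hν1 : ∀ i, ∑ x, ν i x = 1) :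
    ∑ y : (i : ι) → Y i, ∏ i, ν i (y i) = 1 := by
  rw [← Fintype.piFinset_univ, ← Finset.prod_univ_sum]
  simp [hν1]

set_option linter.unusedSectionVars false

private lemma Om_insert {T : Finset (Fin d)} {j : Fin d} (hj : j ∉ T) :
    Om (insert j T) = Om T ∪ (Om T).image (fun ω => Function.update ω j true) := by
  ext ω
  simp only [mem_Om, Finset.mem_union, Finset.mem_image]
  constructor
  · intro hω
    by_cases hωj : ω j = true
    · right
      refine ⟨Function.update ω j false, fun i hi => ?_, ?_⟩
      · rcases eq_or_ne i j with rfl | hij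
        · simp at hi
        · rw [Function.update_of_ne hij] at hi
          exact (Finset.mem_insert.mp (hω i hi)).resolve_left hij
      · funext i
        rcases eq_or_ne i j with rfl | hij
        · simp [hωj]
        · simp [Function.update_of_ne hij]
    · left
      intro i hi
      have hij : i ≠ j := by rintro rfl; exact hωj hi
      exact (Finset.mem_insert.mp (hω i hi)).resolve_left hij
  · rintro (hω | ⟨ω', hω', rfl⟩)
    · intro i hi; exact Finset.mem_insert_of_mem (hω i hi)
    · intro i hi
      rcases eq_or_ne i j with rfl | hij
      · exact Finset.mem_insert_self _ _
      · rw [Function.update_of_ne hij] at hi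
        exact Finset.mem_insert_of_mem (hω' i hi)

private lemma prod_Om_insert {T : Finset (Fin d)} {j : Fin d} (hj : j ∉ T)
    (g : (Fin d → Bool) → ℝ) :
    ∏ ω ∈ Om (insert j T), g ω
      = (∏ ω ∈ Om T, g ω) * ∏ ω ∈ Om T, g (Function.update ω j true) := by
  rw [Om_insert hj, Finset.prod_union, Finset.prod_image]
  · intro ω hω ω' hω' he
    funext i
    rcases eq_or_ne i j with rfl | hij
    · rw [Om_false (ω := ω) hj hω, Om_false (ω := ω') hj hω']
    · have : Function.update ω j true i = Function.update ω' j true i := congrFun he i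
      rwa [Function.update_of_ne hij, Function.update_of_ne hij] at this
  · rw [Finset.disjoint_left]
    rintro ω hω hω'
    obtain ⟨ω'', hω'', rfl⟩ := Finset.mem_image.mp hω'
    have h1 : Function.update ω'' j true j = false := Om_false hj hω
    simp at h1

private def pt (j : Fin d) (z₁ z₂ : (k : {k : Fin d // k ≠ j}) → X k.1) (a : X j)
    (ω : Fin d → Bool) : (i : Fin d) → X i :=
  mrg (ins j a z₁) (ins j a z₂) ω

private lemma mrg_ins {T : Finset (Fin d)} {j : Fin d} (hj : j ∉ T) {ω : Fin d → Bool}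
    (hω : ω ∈ Om T) (a b : X j) (z₁ z₂ : (k : {k : Fin d // k ≠ j}) → X k.1) :
    mrg (ins j a z₁) (ins j b z₂) ω = pt j z₁ z₂ a ω := by
  funext i
  simp only [mrg, pt]
  rcases eq_or_ne i j with rfl | hij
  · rw [Om_false hj hω]; simp
  · by_cases hi : ω i <;> simp [hi, ins_ne _ _ _ hij]

private lemma mrg_ins_upd {T : Finset (Fin d)} {j : Fin d} (hj : j ∉ T) {ω : Fin d → Bool}
    (hω : ω ∈ Om T) (a b : X j) (z₁ z₂ : (k : {k : Fin d // k ≠ j}) → X k.1) :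
    mrg (ins j a z₁) (ins j b z₂) (Function.update ω j true) = pt j z₁ z₂ b ω := by
  funext i
  simp only [mrg, pt]
  rcases eq_or_ne i j with rfl | hij
  · rw [Om_false hj hω]; simp [ins_same]
  · rw [Function.update_of_ne hij]
    by_cases hi : ω i <;> simp [hi, ins_ne _ _ _ hij]

private def RR (h : ((i : Fin d) → X i) → ℝ) (v : Fin d → ((i : Fin d) → X i) → ℝ)
    (T : Finset (Fin d)) (j : Fin d) (z₁ z₂ : (k : {k : Fin d // k ≠ j}) → X k.1)
    (a : X j) : ℝ :=
  (∏ ω ∈ Om T, h (pt j z₁ z₂ a ω)) *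
    ∏ j' ∈ Tᶜ.erase j, ∏ ω ∈ Om T, v j' (pt j z₁ z₂ a ω)

private lemma pt_ne (j : Fin d) (z₁ z₂ : (k : {k : Fin d // k ≠ j}) → X k.1) (a b : X j)
    (ω : Fin d → Bool) {i : Fin d} (hi : i ≠ j) :
    pt j z₁ z₂ a ω i = pt j z₁ z₂ b ω i := by
  simp only [pt, mrg]
  by_cases hb : ω i <;> simp [hb, ins_ne _ _ _ hi]

/-- The `v j` factor is independent of the `j`-th inner variable. -/
private lemma v_pt_indep {v : Fin d → ((i : Fin d) → X i) → ℝ}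
    (hvind : ∀ (j : Fin d) (x x' : (i : Fin d) → X i),
      (∀ k, k ≠ j → x k = x' k) → v j x = v j x')
    (j : Fin d) (z₁ z₂ : (k : {k : Fin d // k ≠ j}) → X k.1) (a b : X j) (ω : Fin d → Bool) :
    v j (pt j z₁ z₂ a ω) = v j (pt j z₁ z₂ b ω) :=
  hvind j _ _ fun k hk => pt_ne j z₁ z₂ a b ω hk

private lemma PP_ins {T : Finset (Fin d)} {j : Fin d} (hj : j ∉ T)
    (h : ((i : Fin d) → X i) → ℝ) {v : Fin d → ((i : Fin d) → X i) → ℝ}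
    (hvind : ∀ (j : Fin d) (x x' : (i : Fin d) → X i),
      (∀ k, k ≠ j → x k = x' k) → v j x = v j x')
    (a₀ a b : X j) (z₁ z₂ : (k : {k : Fin d // k ≠ j}) → X k.1) :
    PP h v T (ins j a z₁) (ins j b z₂)
      = (∏ ω ∈ Om T, v j (pt j z₁ z₂ a₀ ω)) * RR h v T j z₁ z₂ a := by
  have hjc : j ∈ Tᶜ := Finset.mem_compl.mpr hj
  rw [PP, RR, ← Finset.mul_prod_erase (Tᶜ) _ hjc]
  have h1 : ∀ ω ∈ Om T, h (mrg (ins j a z₁) (ins j b z₂) ω) = h (pt j z₁ z₂ a ω) :=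
    fun ω hω => by rw [mrg_ins hj hω]
  have h2 : ∀ ω ∈ Om T,
      v j (mrg (ins j a z₁) (ins j b z₂) ω) = v j (pt j z₁ z₂ a₀ ω) :=
    fun ω hω => by rw [mrg_ins hj hω]; exact v_pt_indep hvind j z₁ z₂ a a₀ ω
  have h3 : ∀ j' ∈ Tᶜ.erase j, ∀ ω ∈ Om T,
      v j' (mrg (ins j a z₁) (ins j b z₂) ω) = v j' (pt j z₁ z₂ a ω) :=
    fun j' _ ω hω => by rw [mrg_ins hj hω]
  rw [Finset.prod_congr rfl h1, Finset.prod_congr rfl h2,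
    Finset.prod_congr rfl (fun j' hj' => Finset.prod_congr rfl (h3 j' hj'))]
  ring

private lemma PP_insert {T : Finset (Fin d)} {j : Fin d} (hj : j ∉ T)
    (h : ((i : Fin d) → X i) → ℝ) (v : Fin d → ((i : Fin d) → X i) → ℝ)
    (a b : X j) (z₁ z₂ : (k : {k : Fin d // k ≠ j}) → X k.1) :
    PP h v (insert j T) (ins j a z₁) (ins j b z₂)
      = RR h v T j z₁ z₂ a * RR h v T j z₁ z₂ b := by
  rw [PP, RR, RR, Finset.compl_insert, prod_Om_insert hj]
  have h1 : ∏ ω ∈ Om T, h (mrg (ins j a z₁) (ins j b z₂) ω)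
      = ∏ ω ∈ Om T, h (pt j z₁ z₂ a ω) :=
    Finset.prod_congr rfl fun ω hω => by rw [mrg_ins hj hω]
  have h2 : ∏ ω ∈ Om T, h (mrg (ins j a z₁) (ins j b z₂) (Function.update ω j true))
      = ∏ ω ∈ Om T, h (pt j z₁ z₂ b ω) :=
    Finset.prod_congr rfl fun ω hω => by rw [mrg_ins_upd hj hω]
  have h3 : ∀ j' : Fin d, ∏ ω ∈ Om (insert j T), v j' (mrg (ins j a z₁) (ins j b z₂) ω)
      = (∏ ω ∈ Om T, v j' (pt j z₁ z₂ a ω)) * ∏ ω ∈ Om T, v j' (pt j z₁ z₂ b ω) := by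
    intro j'
    rw [prod_Om_insert hj]
    exact congrArg₂ (· * ·)
      (Finset.prod_congr rfl fun ω hω => by rw [mrg_ins hj hω])
      (Finset.prod_congr rfl fun ω hω => by rw [mrg_ins_upd hj hω])
  rw [h1, h2, Finset.prod_congr rfl (fun j' _ => h3 j'), Finset.prod_mul_distrib]
  ring

private def ww (μ : (i : Fin d) → X i → ℝ) (j : Fin d)
    (z : (k : {k : Fin d // k ≠ j}) → X k.1) : ℝ :=
  ∏ k : {k : Fin d // k ≠ j}, μ k.1 (z k)

private def SS (μ : (i : Fin d) → X i → ℝ) (h : ((i : Fin d) → X i) → ℝ)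
    (v : Fin d → ((i : Fin d) → X i) → ℝ) (T : Finset (Fin d)) (j : Fin d)
    (z₁ z₂ : (k : {k : Fin d // k ≠ j}) → X k.1) : ℝ :=
  ∑ a : X j, μ j a * RR h v T j z₁ z₂ a

private def VV (v : Fin d → ((i : Fin d) → X i) → ℝ) (T : Finset (Fin d)) (j : Fin d)
    (a₀ : X j) (z₁ z₂ : (k : {k : Fin d // k ≠ j}) → X k.1) : ℝ :=
  ∏ ω ∈ Om T, v j (pt j z₁ z₂ a₀ ω)

set_option maxHeartbeats 2000000 in
private lemma AA_step (μ : (i : Fin d) → X i → ℝ)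
    (hμ0 : ∀ i x, 0 ≤ μ i x) (hμ1 : ∀ i, ∑ x, μ i x = 1)
    (h : ((i : Fin d) → X i) → ℝ) (v : Fin d → ((i : Fin d) → X i) → ℝ)
    (hv0 : ∀ j x, 0 ≤ v j x) (hv1 : ∀ j x, v j x ≤ 1)
    (hvind : ∀ (j : Fin d) (x x' : (i : Fin d) → X i),
      (∀ k, k ≠ j → x k = x' k) → v j x = v j x')
    {T : Finset (Fin d)} {j : Fin d} (hj : j ∉ T) :
    (AA μ h v T) ^ 2 ≤ AA μ h v (insert j T) := by
  classical
  have hne : Nonempty (X j) := by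
    by_contra hc
    rw [not_nonempty_iff] at hc
    have := hμ1 j
    rw [Finset.univ_eq_empty, Finset.sum_empty] at this
    norm_num at this
  obtain ⟨a₀⟩ := hne
  have hconst : ∀ K : ℝ, ∑ b : X j, μ j b * K = K := fun K => by
    rw [← Finset.sum_mul, hμ1, one_mul]
  have hw0 : ∀ z, 0 ≤ ww μ j z := fun z => Finset.prod_nonneg fun k _ => hμ0 _ _
  have hwsum : ∑ z : (k : {k : Fin d // k ≠ j}) → X k.1, ww μ j z = 1 :=
    sum_w' (fun k : {k : Fin d // k ≠ j} => X k.1) (fun k => μ k.1) (fun k => hμ1 k.1)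
  have hV0 : ∀ z₁ z₂, 0 ≤ VV v T j a₀ z₁ z₂ :=
    fun z₁ z₂ => Finset.prod_nonneg fun ω _ => hv0 _ _
  have hV1 : ∀ z₁ z₂, VV v T j a₀ z₁ z₂ ≤ 1 :=
    fun z₁ z₂ => Finset.prod_le_one (fun ω _ => hv0 _ _) (fun ω _ => hv1 _ _)
  -- reindex AA T
  have hA : AA μ h v T = ∑ z₁ : (k : {k : Fin d // k ≠ j}) → X k.1,
      ∑ z₂ : (k : {k : Fin d // k ≠ j}) → X k.1,
      (ww μ j z₁ * ww μ j z₂) * (VV v T j a₀ z₁ z₂ * SS μ h v T j z₁ z₂) := by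
    rw [AA, sum_ins j]
    rw [Finset.sum_congr rfl (fun z₁ _ => Finset.sum_congr rfl (fun a _ => sum_ins j _))]
    refine Finset.sum_congr rfl fun z₁ _ => ?_
    rw [Finset.sum_comm]
    refine Finset.sum_congr rfl fun z₂ _ => ?_
    have hterm : ∀ (a b : X j),
        (∏ i, μ i (ins j a z₁ i)) * (∏ i, μ i (ins j b z₂ i)) *
            PP h v T (ins j a z₁) (ins j b z₂)
          = μ j b * ((μ j a * (ww μ j z₁ * ww μ j z₂)) *
              (VV v T j a₀ z₁ z₂ * RR h v T j z₁ z₂ a)) := by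
      intro a b
      rw [prod_ins, prod_ins, PP_ins hj h hvind a₀ a b z₁ z₂, ww, ww, VV]
      ring
    rw [Finset.sum_congr rfl fun a _ => Finset.sum_congr rfl fun b _ => hterm a b]
    rw [Finset.sum_congr rfl fun a _ => hconst _]
    rw [SS, Finset.mul_sum, Finset.mul_sum]
    exact Finset.sum_congr rfl fun a _ => by ring
  -- reindex AA (insert j T)
  have hB : AA μ h v (insert j T) = ∑ z₁ : (k : {k : Fin d // k ≠ j}) → X k.1,
      ∑ z₂ : (k : {k : Fin d // k ≠ j}) → X k.1,
      (ww μ j z₁ * ww μ j z₂) * (SS μ h v T j z₁ z₂) ^ 2 := by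
    rw [AA, sum_ins j]
    rw [Finset.sum_congr rfl (fun z₁ _ => Finset.sum_congr rfl (fun a _ => sum_ins j _))]
    refine Finset.sum_congr rfl fun z₁ _ => ?_
    rw [Finset.sum_comm]
    refine Finset.sum_congr rfl fun z₂ _ => ?_
    have hterm : ∀ (a b : X j),
        (∏ i, μ i (ins j a z₁ i)) * (∏ i, μ i (ins j b z₂ i)) *
            PP h v (insert j T) (ins j a z₁) (ins j b z₂)
          = (ww μ j z₁ * ww μ j z₂) *
              ((μ j a * RR h v T j z₁ z₂ a) * (μ j b * RR h v T j z₁ z₂ b)) := by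
      intro a b
      rw [prod_ins, prod_ins, PP_insert hj h v a b z₁ z₂, ww, ww]
      ring
    rw [Finset.sum_congr rfl fun a _ => Finset.sum_congr rfl fun b _ => hterm a b]
    rw [sq, SS, Finset.sum_mul_sum, Finset.mul_sum]
    exact Finset.sum_congr rfl fun a _ => by rw [Finset.mul_sum]
  -- flatten to sums over pairs
  have flat : ∀ (f : ((k : {k : Fin d // k ≠ j}) → X k.1) →
      ((k : {k : Fin d // k ≠ j}) → X k.1) → ℝ),
      (∑ z₁, ∑ z₂, f z₁ z₂)
        = ∑ p : ((k : {k : Fin d // k ≠ j}) → X k.1) × ((k : {k : Fin d // k ≠ j}) → X k.1),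
            f p.1 p.2 :=
    fun f => (Fintype.sum_prod_type (fun p => f p.1 p.2)).symm
  rw [hA, hB, flat, flat]
  set W : ((k : {k : Fin d // k ≠ j}) → X k.1) × ((k : {k : Fin d // k ≠ j}) → X k.1) → ℝ :=
    fun p => ww μ j p.1 * ww μ j p.2 with hWdef
  set S : ((k : {k : Fin d // k ≠ j}) → X k.1) × ((k : {k : Fin d // k ≠ j}) → X k.1) → ℝ :=
    fun p => SS μ h v T j p.1 p.2 with hSdef
  set V : ((k : {k : Fin d // k ≠ j}) → X k.1) × ((k : {k : Fin d // k ≠ j}) → X k.1) → ℝ :=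
    fun p => VV v T j a₀ p.1 p.2 with hVdef
  have hW0 : ∀ p, 0 ≤ W p := fun p => mul_nonneg (hw0 _) (hw0 _)
  have hWsum : ∑ p, W p = 1 := by
    rw [hWdef]
    rw [show (∑ p : ((k : {k : Fin d // k ≠ j}) → X k.1) ×
        ((k : {k : Fin d // k ≠ j}) → X k.1), ww μ j p.1 * ww μ j p.2)
      = ∑ z₁, ∑ z₂, ww μ j z₁ * ww μ j z₂ from
      Fintype.sum_prod_type (fun p => ww μ j p.1 * ww μ j p.2)]
    rw [← Finset.sum_mul_sum, hwsum, one_mul]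
  have key1 : (∑ p, W p * (V p * S p)) ≤ ∑ p, W p * |S p| := by
    refine Finset.sum_le_sum fun p _ => mul_le_mul_of_nonneg_left ?_ (hW0 p)
    calc V p * S p ≤ V p * |S p| :=
          mul_le_mul_of_nonneg_left (le_abs_self _) (hV0 _ _)
      _ ≤ 1 * |S p| := mul_le_mul_of_nonneg_right (hV1 _ _) (abs_nonneg _)
      _ = |S p| := one_mul _
  have key2 : -(∑ p, W p * |S p|) ≤ ∑ p, W p * (V p * S p) := by
    rw [← Finset.sum_neg_distrib]
    refine Finset.sum_le_sum fun p _ => ?_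
    rw [← mul_neg]
    refine mul_le_mul_of_nonneg_left ?_ (hW0 p)
    calc -|S p| = -(1 * |S p|) := by rw [one_mul]
      _ ≤ -(V p * |S p|) :=
          neg_le_neg (mul_le_mul_of_nonneg_right (hV1 _ _) (abs_nonneg _))
      _ = V p * -|S p| := by ring
      _ ≤ V p * S p := mul_le_mul_of_nonneg_left (neg_abs_le _) (hV0 _ _)
  calc (∑ p, W p * (V p * S p)) ^ 2 ≤ (∑ p, W p * |S p|) ^ 2 := sq_le_sq' key2 key1
    _ = (∑ p, Real.sqrt (W p) * (Real.sqrt (W p) * |S p|)) ^ 2 := by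
        congr 1
        exact Finset.sum_congr rfl fun p _ => by
          rw [← mul_assoc, Real.mul_self_sqrt (hW0 p)]
    _ ≤ (∑ p, Real.sqrt (W p) ^ 2) * ∑ p, (Real.sqrt (W p) * |S p|) ^ 2 :=
        Finset.sum_mul_sq_le_sq_mul_sq _ _ _
    _ = (∑ p, W p) * ∑ p, W p * S p ^ 2 := by
        congr 1
        · exact Finset.sum_congr rfl fun p _ => Real.sq_sqrt (hW0 p)
        · exact Finset.sum_congr rfl fun p _ => by
            rw [mul_pow, Real.sq_sqrt (hW0 p), sq_abs]
    _ = ∑ p, W p * S p ^ 2 := by rw [hWsum, one_mul]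

private lemma Om_empty : Om (∅ : Finset (Fin d)) = {fun _ => false} := by
  ext ω
  rw [mem_Om, Finset.mem_singleton]
  constructor
  · intro hω
    funext i
    cases hb : ω i with
    | false => rfl
    | true => exact absurd (hω i hb) (Finset.notMem_empty i)
  · rintro rfl i hi
    simp at hi

private lemma AA_empty (μ : (i : Fin d) → X i → ℝ) (hμ1 : ∀ i, ∑ x, μ i x = 1)
    (h : ((i : Fin d) → X i) → ℝ) (v : Fin d → ((i : Fin d) → X i) → ℝ) :
    AA μ h v ∅ = ∑ x : (i : Fin d) → X i,
      (∏ i, μ i (x i)) * (h x * ∏ j' : Fin d, v j' x) := by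
  rw [AA]
  have hP : ∀ x y : (i : Fin d) → X i, PP h v ∅ x y = h x * ∏ j' : Fin d, v j' x := by
    intro x y
    have hm : mrg x y (fun _ => false) = x := by funext i; simp [mrg]
    rw [PP, Om_empty, Finset.compl_empty]
    simp [hm]
  refine Finset.sum_congr rfl fun x _ => ?_
  rw [Finset.sum_congr rfl fun y _ => by rw [hP x y]]
  have : ∀ y : (i : Fin d) → X i,
      (∏ i, μ i (x i)) * (∏ i, μ i (y i)) * (h x * ∏ j' : Fin d, v j' x)
        = (∏ i, μ i (y i)) * ((∏ i, μ i (x i)) * (h x * ∏ j' : Fin d, v j' x)) := by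
    intro y; ring
  rw [Finset.sum_congr rfl fun y _ => this y, ← Finset.sum_mul, sum_w μ hμ1, one_mul]

private lemma AA_univ (μ : (i : Fin d) → X i → ℝ)
    (h : ((i : Fin d) → X i) → ℝ) (v : Fin d → ((i : Fin d) → X i) → ℝ) :
    AA μ h v Finset.univ = ∑ x : (i : Fin d) → X i, ∑ y : (i : Fin d) → X i,
      (∏ i, μ i (x i)) * (∏ i, μ i (y i)) *
        ∏ ω : Fin d → Bool, h (fun i => if ω i then y i else x i) := by
  rw [AA]
  have hOm : Om (Finset.univ : Finset (Fin d)) = Finset.univ := by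
    ext ω; simp [mem_Om]
  refine Finset.sum_congr rfl fun x _ => Finset.sum_congr rfl fun y _ => ?_
  rw [PP, hOm, Finset.compl_univ, Finset.prod_empty, mul_one]
  rfl

private lemma AA_chain (μ : (i : Fin d) → X i → ℝ)
    (hμ0 : ∀ i x, 0 ≤ μ i x) (hμ1 : ∀ i, ∑ x, μ i x = 1)
    (h : ((i : Fin d) → X i) → ℝ) (v : Fin d → ((i : Fin d) → X i) → ℝ)
    (hv0 : ∀ j x, 0 ≤ v j x) (hv1 : ∀ j x, v j x ≤ 1)
    (hvind : ∀ (j : Fin d) (x x' : (i : Fin d) → X i),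
      (∀ k, k ≠ j → x k = x' k) → v j x = v j x')
    (T : Finset (Fin d)) :
    (AA μ h v ∅) ^ (2 ^ T.card) ≤ AA μ h v T := by
  classical
  induction T using Finset.induction_on with
  | empty => simp
  | @insert j T hj IH =>
    rw [Finset.card_insert_of_notMem hj, pow_succ, pow_mul]
    rcases Finset.eq_empty_or_nonempty T with rfl | hT
    · simpa using AA_step μ hμ0 hμ1 h v hv0 hv1 hvind hj
    · have hc : T.card ≠ 0 := by simpa using hT.card_pos.ne'
      have heven : Even (2 ^ T.card) := by
        obtain ⟨m, hm⟩ := Nat.exists_eq_succ_of_ne_zero hc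
        rw [hm, pow_succ]
        exact Even.mul_left even_two _
      have h0 : (0:ℝ) ≤ (AA μ h v ∅) ^ (2 ^ T.card) := heven.pow_nonneg _
      calc ((AA μ h v ∅) ^ (2 ^ T.card)) ^ 2 ≤ (AA μ h v T) ^ 2 :=
            pow_le_pow_left₀ h0 IH 2
        _ ≤ AA μ h v (insert j T) := AA_step μ hμ0 hμ1 h v hv0 hv1 hvind hj

/-- The box norm of `h` with respect to the product of the discrete probability measures `μ i`. -/
def boxNormP {d : ℕ} (X : Fin d → Type*) [∀ i, Fintype (X i)]
    (μ : (i : Fin d) → X i → ℝ) (h : ((i : Fin d) → X i) → ℝ) : ℝ :=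
  (∑ x : (i : Fin d) → X i, ∑ y : (i : Fin d) → X i,
    (∏ i, μ i (x i)) * (∏ i, μ i (y i)) *
      ∏ ω : Fin d → Bool, h (fun i => if ω i then y i else x i)) ^ (((2 : ℝ) ^ d)⁻¹)

/-- Bounded generalized von Neumann inequality for product measures. -/
theorem bounded_von_neumann (d : ℕ) (hd : 1 ≤ d) (X : Fin d → Type)
    [∀ i, Fintype (X i)] (μ : (i : Fin d) → X i → ℝ)
    (hμ0 : ∀ i x, 0 ≤ μ i x) (hμ1 : ∀ i, ∑ x, μ i x = 1)
    (h : ((i : Fin d) → X i) → ℝ)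
    (u : (j : Fin d) → ((k : {k : Fin d // k ≠ j}) → X k.1) → ℝ)
    (hu : ∀ j y, 0 ≤ u j y ∧ u j y ≤ 1) :
    |∑ x : (i : Fin d) → X i,
      (∏ i, μ i (x i)) * (h x * ∏ j, u j (fun k => x k.1))| ≤ boxNormP X μ h := by
  classical
  set v : Fin d → ((i : Fin d) → X i) → ℝ := fun j x => u j (fun k => x k.1) with hvdef
  have hv0 : ∀ j x, 0 ≤ v j x := fun j x => (hu j _).1
  have hv1 : ∀ j x, v j x ≤ 1 := fun j x => (hu j _).2
  have hvind : ∀ (j : Fin d) (x x' : (i : Fin d) → X i),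
      (∀ k, k ≠ j → x k = x' k) → v j x = v j x' := by
    intro j x x' hag
    exact congrArg (u j) (funext fun k => hag k.1 k.2)
  have hF : (∑ x : (i : Fin d) → X i,
      (∏ i, μ i (x i)) * (h x * ∏ j, u j (fun k => x k.1))) = AA μ h v ∅ :=
    (AA_empty μ hμ1 h v).symm
  rw [hF]
  have key : (AA μ h v ∅) ^ (2 ^ d) ≤ AA μ h v Finset.univ := by
    simpa [Finset.card_fin] using
      AA_chain μ hμ0 hμ1 h v hv0 hv1 hvind Finset.univ
  have heven : Even (2 ^ d) := by
    obtain ⟨m, hm⟩ := Nat.exists_eq_succ_of_ne_zero (Nat.one_le_iff_ne_zero.mp hd)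
    rw [hm, pow_succ]
    exact Even.mul_left even_two _
  have habs : |AA μ h v ∅| ^ (2 ^ d) ≤ AA μ h v Finset.univ := by
    rw [Even.pow_abs heven]; exact key
  have hbox : boxNormP X μ h = (AA μ h v Finset.univ) ^ (((2 : ℝ) ^ d)⁻¹) := by
    rw [boxNormP, AA_univ μ h v]
  have hone : ((2 ^ d : ℕ) : ℝ) * ((2 : ℝ) ^ d)⁻¹ = 1 := by
    push_cast
    exact mul_inv_cancel₀ (by positivity)
  calc |AA μ h v ∅| = |AA μ h v ∅| ^ (1 : ℝ) := (Real.rpow_one _).symm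
    _ = |AA μ h v ∅| ^ (((2 ^ d : ℕ) : ℝ) * ((2 : ℝ) ^ d)⁻¹) := by rw [hone]
    _ = (|AA μ h v ∅| ^ ((2 ^ d : ℕ) : ℝ)) ^ (((2 : ℝ) ^ d)⁻¹) :=
        Real.rpow_mul (abs_nonneg _) _ _
    _ = (|AA μ h v ∅| ^ (2 ^ d : ℕ)) ^ (((2 : ℝ) ^ d)⁻¹) := by
        rw [Real.rpow_natCast]
    _ ≤ (AA μ h v Finset.univ) ^ (((2 : ℝ) ^ d)⁻¹) :=
        Real.rpow_le_rpow (pow_nonneg (abs_nonneg _) _) habs (by positivity)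
    _ = boxNormP X μ h := hbox.symm
end
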